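/- Let t_1 = 22 and t_{i+1} = t_i(t_i−1)+1 for i ≥ 1, let C = Σ_{i=1}^∞ 1/(t_i−1), and let R = 5/3 + C/2. Let β_1 = 58/529, β_2 = 3 − (4−2β_1)/((3−R)(2−β_1)−1), β_3 = 148/287, β_4 = 15/23, β_5 = 13/23. Define w : (0,1] → ℝ by w(1) = 1; w(x) = (1−β_i)/(i+1−β_i) for x ∈ [1/(i+1), 1/i) and 1 ≤ i ≤ 5; and w(x) = 0 for x ∈ (0,1/6). Then for every finite multiset T of reals in (0,1] with Σ_{t∈T} t < 1 and every a ∈ (0,1], it holds that w(a) + Σ_{t∈T} w(t) ≤ R. -/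

import Mathlib

open scoped BigOperators

noncomputable section

/-- The sequence `t₁ = 22`, `t_{i+1} = t_i(t_i − 1) + 1` (0-indexed: `t 0 = 22`). -/
def t : ℕ → ℕ
  | 0 => 22
  | n + 1 => t n * (t n - 1) + 1

/-- `C = Σ_{i=1}^∞ 1/(t_i − 1)`. -/
def C : ℝ := ∑' i : ℕ, 1 / ((t i : ℝ) - 1)

/-- `R = 5/3 + C/2 ≈ 1.691561`. -/
def R : ℝ := 5 / 3 + C / 2

def β : ℕ → ℝ := fun i =>
  if i = 1 then 58 / 529
  else if i = 2 then 3 - (4 - 2 * (58 / 529 : ℝ)) / ((3 - R) * (2 - 58 / 529) - 1)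
  else if i = 3 then 148 / 287
  else if i = 4 then 15 / 23
  else 13 / 23

/-- The weight function `w` for the first part of the input: `w(1) = 1`,
`w(x) = (1−β_i)/(i+1−β_i)` for `x ∈ [1/(i+1), 1/i)`, `1 ≤ i ≤ 5`, and
`w(x) = 0` for `x ∈ (0, 1/6)`. -/
def w (x : ℝ) : ℝ :=
  if x = 1 then 1
  else if 1 / 2 ≤ x then (1 - β 1) / (2 - β 1)
  else if 1 / 3 ≤ x then (1 - β 2) / (3 - β 2)
  else if 1 / 4 ≤ x then (1 - β 3) / (4 - β 3)
  else if 1 / 5 ≤ x then (1 - β 4) / (5 - β 4)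
  else if 1 / 6 ≤ x then (1 - β 5) / (6 - β 5)
  else 0

/- ## Auxiliary lemmas -/

lemma t_ge (n : ℕ) : 22 ≤ t n := by
  induction n with
  | zero => simp [t]
  | succ n ih =>
    have h : 22 * 21 ≤ t n * (t n - 1) := Nat.mul_le_mul ih (by omega)
    show 22 ≤ t n * (t n - 1) + 1
    omega

lemma t_cast_ge (n : ℕ) : (21 : ℝ) ≤ (t n : ℝ) - 1 := by
  have h : (22 : ℝ) ≤ (t n : ℝ) := by exact_mod_cast t_ge n
  linarith

lemma t_term_nonneg (n : ℕ) : 0 ≤ 1 / ((t n : ℝ) - 1) := by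
  have := t_cast_ge n
  positivity

lemma t_term_le (n : ℕ) : 1 / ((t n : ℝ) - 1) ≤ (1 / 21) * (1 / 22) ^ n := by
  induction n with
  | zero => norm_num [t]
  | succ n ih =>
    have h1 : 1 ≤ t n := le_trans (by norm_num) (t_ge n)
    have hcast : ((t (n + 1) : ℝ)) - 1 = (t n : ℝ) * ((t n : ℝ) - 1) := by
      show ((t n * (t n - 1) + 1 : ℕ) : ℝ) - 1 = _
      push_cast [Nat.cast_sub h1]
      ring
    have h21 : (21 : ℝ) ≤ (t n : ℝ) - 1 := t_cast_ge n
    have h22 : (22 : ℝ) ≤ (t n : ℝ) := by exact_mod_cast t_ge n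
    have hpos : (0 : ℝ) < (t n : ℝ) - 1 := by linarith
    have hpos2 : (0 : ℝ) < (t n : ℝ) := by linarith
    rw [hcast]
    have e1 : 1 / ((t n : ℝ) * ((t n : ℝ) - 1)) = (1 / (t n : ℝ)) * (1 / ((t n : ℝ) - 1)) := by
      rw [one_div_mul_eq_div, div_div]
      ring_nf
    rw [e1, pow_succ]
    have hb1 : (1 : ℝ) / (t n : ℝ) ≤ 1 / 22 := by
      apply one_div_le_one_div_of_le <;> linarith
    have hb2 : (1 : ℝ) / ((t n : ℝ) - 1) ≤ (1 / 21) * (1 / 22) ^ n := ih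
    calc (1 / (t n : ℝ)) * (1 / ((t n : ℝ) - 1))
        ≤ (1 / 22) * ((1 / 21) * (1 / 22) ^ n) := by
          apply mul_le_mul hb1 hb2 (t_term_nonneg n) (by norm_num)
      _ = 1 / 21 * ((1 / 22) ^ n * (1 / 22)) := by ring

lemma summable_t : Summable (fun i : ℕ => 1 / ((t i : ℝ) - 1)) := by
  apply Summable.of_nonneg_of_le t_term_nonneg t_term_le
  exact (summable_geometric_of_lt_one (by norm_num) (by norm_num)).mul_left _

lemma C_lb : (1 : ℝ) / 21 ≤ C := by
  have h := Summable.le_tsum summable_t 0 (fun j _ => t_term_nonneg j)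
  have h0 : (1 : ℝ) / ((t 0 : ℝ) - 1) = 1 / 21 := by norm_num [t]
  rw [h0] at h
  exact h

lemma C_ub : C ≤ 22 / 441 := by
  have h := Summable.tsum_le_tsum t_term_le summable_t
    ((summable_geometric_of_lt_one (by norm_num) (by norm_num)).mul_left (1 / 21 : ℝ))
  have h2 : ∑' n : ℕ, (1 / 21 : ℝ) * (1 / 22) ^ n = 22 / 441 := by
    rw [tsum_mul_left, tsum_geometric_of_lt_one (by norm_num) (by norm_num)]
    norm_num
  calc C ≤ ∑' n : ℕ, (1 / 21 : ℝ) * (1 / 22) ^ n := h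
    _ = 22 / 441 := h2

lemma R_lb : (71 : ℝ) / 42 ≤ R := by
  have := C_lb; unfold R; linarith

lemma R_ub : R ≤ (746 : ℝ) / 441 := by
  have := C_ub; unfold R; linarith

lemma val2 : (1 - β 2) / (3 - β 2) = R - 1471 / 1000 := by
  have hR := R_ub
  have hD : (3 - R) * (2 - 58 / 529 : ℝ) - 1 ≠ 0 := by
    have : (1 : ℝ) < (3 - R) * (2 - 58 / 529) - 1 := by nlinarith
    linarith
  have hβ : β 2 = 3 - (4 - 2 * (58 / 529 : ℝ)) / ((3 - R) * (2 - 58 / 529) - 1) := by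
    norm_num [β]
  rw [hβ]
  have hD' : (3 : ℝ) - (3 - (4 - 2 * (58 / 529 : ℝ)) / ((3 - R) * (2 - 58 / 529) - 1)) ≠ 0 := by
    have h1 : (1 : ℝ) < (3 - R) * (2 - 58 / 529) - 1 := by nlinarith
    have h2 : (0 : ℝ) < (4 - 2 * (58 / 529 : ℝ)) / ((3 - R) * (2 - 58 / 529) - 1) := by
      positivity
    intro hc
    rw [sub_sub_cancel] at hc
    exact absurd hc (ne_of_gt h2)
  have hd2 : (2471 : ℝ) - R * 1000 ≠ 0 := by
    intro hc
    have : R = 2471 / 1000 := by linarith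
    rw [this] at hR
    norm_num at hR
  field_simp [hd2]
  have hk : (2471 - R * 1000) * (2471 - R * 1000)⁻¹ = 1 := mul_inv_cancel₀ hd2
  have hD2 : (3 - R) * (2 * 529 - 58 : ℝ) - 529 ≠ 0 := by
    intro hc; apply hD; linear_combination hc / 529
  rw [sub_sub_cancel, div_eq_iff (by simpa using div_ne_zero (by norm_num : (4 * 529 - 2 * 58 : ℝ) ≠ 0) hD2)]
  have hDe : (3 - R) * (2 * 529 - 58 : ℝ) - 529 = 2471 - R * 1000 := by ring
  rw [hDe]
  field_simp
  ring

lemma w_class1 {x : ℝ} (h1 : 1 / 2 ≤ x) (h2 : x ≠ 1) : w x = 471 / 1000 := by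
  rw [w, if_neg h2, if_pos h1]
  norm_num [β]

lemma w_class2 {x : ℝ} (h1 : 1 / 3 ≤ x) (h2 : x < 1 / 2) : w x = R - 1471 / 1000 := by
  have hne : x ≠ 1 := by intro h; rw [h] at h2; norm_num at h2
  rw [w, if_neg hne, if_neg (by linarith), if_pos h1]
  exact val2

lemma w_class3 {x : ℝ} (h1 : 1 / 4 ≤ x) (h2 : x < 1 / 3) : w x = 139 / 1000 := by
  have hne : x ≠ 1 := by intro h; rw [h] at h2; norm_num at h2
  rw [w, if_neg hne, if_neg (by linarith), if_neg (by linarith), if_pos h1]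
  norm_num [β]

lemma w_class4 {x : ℝ} (h1 : 1 / 5 ≤ x) (h2 : x < 1 / 4) : w x = 2 / 25 := by
  have hne : x ≠ 1 := by intro h; rw [h] at h2; norm_num at h2
  rw [w, if_neg hne, if_neg (by linarith), if_neg (by linarith), if_neg (by linarith),
    if_pos h1]
  norm_num [β]

lemma w_class5 {x : ℝ} (h1 : 1 / 6 ≤ x) (h2 : x < 1 / 5) : w x = 2 / 25 := by
  have hne : x ≠ 1 := by intro h; rw [h] at h2; norm_num at h2
  rw [w, if_neg hne, if_neg (by linarith), if_neg (by linarith), if_neg (by linarith),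
    if_neg (by linarith), if_pos h1]
  norm_num [β]

lemma w_class6 {x : ℝ} (h2 : x < 1 / 6) : w x = 0 := by
  have hne : x ≠ 1 := by intro h; rw [h] at h2; norm_num at h2
  rw [w, if_neg hne, if_neg (by linarith), if_neg (by linarith), if_neg (by linarith),
    if_neg (by linarith), if_neg (by linarith)]

lemma w_le_one (x : ℝ) : w x ≤ 1 := by
  have hR := R_ub
  rw [w]
  split_ifs with h1 h2 h3 h4 h5 h6
  · exact le_refl 1
  · norm_num [β]
  · rw [val2]; linarith
  · norm_num [β]
  · norm_num [β]
  · norm_num [β]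
  · norm_num

lemma nat_key (n3 n4 n5 B K : ℕ) (hB : 15 * n3 + 12 * n4 + 10 * n5 ≤ B) (hB' : B ≤ 59)
    (hK : ∀ m3 m4 m5 : ℕ, m3 ≤ 3 → m4 ≤ 4 → m5 ≤ 5 →
      15 * m3 + 12 * m4 + 10 * m5 ≤ B → 139 * m3 + 80 * m4 + 80 * m5 ≤ K) :
    139 * n3 + 80 * n4 + 80 * n5 ≤ K := by
  exact hK n3 n4 n5 (by omega) (by omega) (by omega) hB

lemma lp_bound (n1 n2 n3 n4 n5 : ℕ) (h : 30 * n1 + 20 * n2 + 15 * n3 + 12 * n4 + 10 * n5 ≤ 59)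
    (u : ℝ) (hu1 : 9218 / 42000 ≤ u) (hu2 : u ≤ 1 / 4) :
    471 / 1000 * (n1 : ℝ) + u * n2 + 139 / 1000 * n3 + 2 / 25 * n4 + 2 / 25 * n5
      ≤ 471 / 1000 + u := by
  have hn1 : n1 ≤ 1 := by omega
  have hn2 : n2 ≤ 2 := by omega
  interval_cases n1 <;> interval_cases n2
  · -- n1 = 0, n2 = 0
    have key : 139 * n3 + 80 * n4 + 80 * n5 ≤ 497 := by
      refine nat_key n3 n4 n5 59 497 (by omega) (by omega) ?_
      intro m3 m4 m5 h3 h4 h5 hc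
      interval_cases m3 <;> interval_cases m4 <;> interval_cases m5 <;> omega
    have keyR : 139 * (n3 : ℝ) + 80 * n4 + 80 * n5 ≤ 497 := by exact_mod_cast key
    push_cast
    linarith
  · -- n1 = 0, n2 = 1
    have key : 139 * n3 + 80 * n4 + 80 * n5 ≤ 299 := by
      refine nat_key n3 n4 n5 39 299 (by omega) (by omega) ?_
      intro m3 m4 m5 h3 h4 h5 hc
      interval_cases m3 <;> interval_cases m4 <;> interval_cases m5 <;> omega
    have keyR : 139 * (n3 : ℝ) + 80 * n4 + 80 * n5 ≤ 299 := by exact_mod_cast key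
    push_cast
    linarith
  · -- n1 = 0, n2 = 2
    have key : 139 * n3 + 80 * n4 + 80 * n5 ≤ 139 := by
      refine nat_key n3 n4 n5 19 139 (by omega) (by omega) ?_
      intro m3 m4 m5 h3 h4 h5 hc
      interval_cases m3 <;> interval_cases m4 <;> interval_cases m5 <;> omega
    have keyR : 139 * (n3 : ℝ) + 80 * n4 + 80 * n5 ≤ 139 := by exact_mod_cast key
    push_cast
    linarith
  · -- n1 = 1, n2 = 0
    have key : 139 * n3 + 80 * n4 + 80 * n5 ≤ 219 := by
      refine nat_key n3 n4 n5 29 219 (by omega) (by omega) ?_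
      intro m3 m4 m5 h3 h4 h5 hc
      interval_cases m3 <;> interval_cases m4 <;> interval_cases m5 <;> omega
    have keyR : 139 * (n3 : ℝ) + 80 * n4 + 80 * n5 ≤ 219 := by exact_mod_cast key
    push_cast
    linarith
  · -- n1 = 1, n2 = 1
    have key : n3 = 0 ∧ n4 = 0 ∧ n5 = 0 := by omega
    obtain ⟨e3, e4, e5⟩ := key
    subst e3; subst e4; subst e5
    push_cast
    linarith
  · -- n1 = 1, n2 = 2 : impossible
    omega

lemma core (T : Multiset ℝ) (hT : ∀ x ∈ T, 0 < x ∧ x < 1) :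
    ∃ n1 n2 n3 n4 n5 : ℕ,
      (T.map w).sum ≤ 471 / 1000 * (n1 : ℝ) + (R - 1471 / 1000) * n2 + 139 / 1000 * n3
          + 2 / 25 * n4 + 2 / 25 * n5
      ∧ (n1 : ℝ) / 2 + (n2 : ℝ) / 3 + (n3 : ℝ) / 4 + (n4 : ℝ) / 5 + (n5 : ℝ) / 6 ≤ T.sum := by
  induction T using Multiset.induction_on with
  | empty => exact ⟨0, 0, 0, 0, 0, by simp, by simp⟩
  | cons a T ih =>
    obtain ⟨n1, n2, n3, n4, n5, hA, hB⟩ := ih (fun x hx => hT x (Multiset.mem_cons_of_mem hx))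
    obtain ⟨ha0, ha1⟩ := hT a (Multiset.mem_cons_self a T)
    rw [Multiset.map_cons, Multiset.sum_cons, Multiset.sum_cons]
    by_cases c1 : 1 / 2 ≤ a
    · refine ⟨n1 + 1, n2, n3, n4, n5, ?_, ?_⟩
      · rw [w_class1 c1 (ne_of_lt ha1)]; push_cast; linarith
      · push_cast; linarith
    · by_cases c2 : 1 / 3 ≤ a
      · refine ⟨n1, n2 + 1, n3, n4, n5, ?_, ?_⟩
        · rw [w_class2 c2 (by linarith)]; push_cast; linarith
        · push_cast; linarith
      · by_cases c3 : 1 / 4 ≤ a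
        · refine ⟨n1, n2, n3 + 1, n4, n5, ?_, ?_⟩
          · rw [w_class3 c3 (by linarith)]; push_cast; linarith
          · push_cast; linarith
        · by_cases c4 : 1 / 5 ≤ a
          · refine ⟨n1, n2, n3, n4 + 1, n5, ?_, ?_⟩
            · rw [w_class4 c4 (by linarith)]; push_cast; linarith
            · push_cast; linarith
          · by_cases c5 : 1 / 6 ≤ a
            · refine ⟨n1, n2, n3, n4, n5 + 1, ?_, ?_⟩
              · rw [w_class5 c5 (by linarith)]; push_cast; linarith
              · push_cast; linarith
            · refine ⟨n1, n2, n3, n4, n5, ?_, ?_⟩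
              · rw [w_class6 (by linarith)]; linarith
              · linarith

/-- every bin (a multiset `T` of total size below 1 plus one
additional last item `a`) has total `w`-weight at most `R`. -/
theorem stmt7 (T : Multiset ℝ) (hT : ∀ x ∈ T, 0 < x ∧ x ≤ 1)
    (hsum : T.sum < 1) (a : ℝ) (ha : 0 < a) (ha1 : a ≤ 1) :
    w a + (T.map w).sum ≤ R := by
  have hT' : ∀ x ∈ T, 0 < x ∧ x < 1 := by
    intro x hx
    refine ⟨(hT x hx).1, ?_⟩
    have hle : x ≤ T.sum :=
      Multiset.single_le_sum (fun y hy => le_of_lt (hT y hy).1) x hx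
    linarith
  obtain ⟨n1, n2, n3, n4, n5, hA, hB⟩ := core T hT'
  have hcostR : 30 * (n1 : ℝ) + 20 * n2 + 15 * n3 + 12 * n4 + 10 * n5 < 60 := by linarith
  have hcostN : 30 * n1 + 20 * n2 + 15 * n3 + 12 * n4 + 10 * n5 ≤ 59 := by
    have : ((30 * n1 + 20 * n2 + 15 * n3 + 12 * n4 + 10 * n5 : ℕ) : ℝ) < 60 := by
      push_cast; linarith
    have h60 : (30 * n1 + 20 * n2 + 15 * n3 + 12 * n4 + 10 * n5 : ℕ) < 60 := by
      exact_mod_cast this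
    omega
  have hu1 : (9218 : ℝ) / 42000 ≤ R - 1471 / 1000 := by have := R_lb; linarith
  have hu2 : R - 1471 / 1000 ≤ 1 / 4 := by have := R_ub; linarith
  have hlp := lp_bound n1 n2 n3 n4 n5 hcostN (R - 1471 / 1000) hu1 hu2
  have hwa := w_le_one a
  have hfin : (T.map w).sum ≤ 471 / 1000 + (R - 1471 / 1000) := le_trans hA hlp
  linarith

end
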